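/- In the ESC model with ν = NegBin(r, p) + 1 (a negative binomial on {0,1,2,…} shifted by 1), the conditional distribution of the number of clusters K given r and p is π(K | r, p) = (1/P(E_n | r, p))·(1−p)^{rK} p^{n−K}/((n−K)·B(rK, n−K)) for 1 ≤ K < n, and π(n | r, p) = (1/P(E_n | r, p))·(1−p)^{rn}. -/

import Mathlib

open Finset

/-- Negative binomial pmf with real shape `r`: `P(N = k) = Γ(r+k)/(Γ(r)k!)·(1−p)^r·p^k`. -/
noncomputable def negBinPMF (r p : ℝ) (k : ℕ) : ℝ :=
  Real.Gamma (r + k) / (Real.Gamma r * k.factorial) * (1 - p) ^ r * p ^ k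

/-- The shifted negative binomial `NegBin(r, p) + 1`, a distribution on `{1, 2, …}`. -/
noncomputable def shiftedNegBin (r p : ℝ) (k : ℕ) : ℝ :=
  if k = 0 then 0 else negBinPMF r p (k - 1)

/-- Probability that `K` i.i.d. draws from `ν` form a composition of `n` of length `K`. -/
noncomputable def compositionProb (ν : ℕ → ℝ) (K n : ℕ) : ℝ :=
  ∑ m ∈ (Finset.Nat.antidiagonalTuple K n).filter (fun m => ∀ i, 1 ≤ m i), ∏ i, ν (m i)

/-- `P(E_n | ν)`: the probability that some initial sum of i.i.d. draws from `ν` equals `n`. -/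
noncomputable def hitProb (ν : ℕ → ℝ) (n : ℕ) : ℝ :=
  ∑' K : ℕ, compositionProb ν K n

/-- The real Beta function `B(a, b) = Γ(a)Γ(b)/Γ(a + b)`. -/
noncomputable def realBeta (a b : ℝ) : ℝ :=
  Real.Gamma a * Real.Gamma b / Real.Gamma (a + b)

noncomputable def agf (a : ℝ) (k : ℕ) : ℝ := (ascPochhammer ℝ k).eval a / k.factorial

lemma agf_zero (a : ℝ) : agf a 0 = 1 := by simp [agf]

lemma agf_succ_mul (a : ℝ) (k : ℕ) :
    ((k : ℝ) + 1) * agf a (k + 1) = (a + k) * agf a k := by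
  have hk : (k.factorial : ℝ) ≠ 0 := by exact_mod_cast k.factorial_ne_zero
  have hk1 : ((k + 1).factorial : ℝ) = ((k : ℝ) + 1) * k.factorial := by
    push_cast [Nat.factorial_succ]; ring
  rw [agf, agf, ascPochhammer_succ_right]
  simp only [Polynomial.eval_mul, Polynomial.eval_add, Polynomial.eval_X,
    Polynomial.eval_natCast, hk1]
  field_simp

-- Vandermonde convolution
lemma agf_vandermonde (a b : ℝ) : ∀ M : ℕ,
    ∑ ij ∈ Finset.HasAntidiagonal.antidiagonal M, agf a ij.1 * agf b ij.2 = agf (a + b) M := by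
  intro M
  induction M with
  | zero => simp [agf_zero]
  | succ M ih =>
    have hM1 : ((M : ℝ) + 1) ≠ 0 := by positivity
    have key : ((M : ℝ) + 1) * ∑ ij ∈ Finset.HasAntidiagonal.antidiagonal (M+1), agf a ij.1 * agf b ij.2
        = ((M : ℝ) + 1) * agf (a + b) (M + 1) := by
      have hsplit : ((M : ℝ) + 1) * ∑ ij ∈ Finset.HasAntidiagonal.antidiagonal (M+1), agf a ij.1 * agf b ij.2
          = (∑ ij ∈ Finset.HasAntidiagonal.antidiagonal (M+1), (ij.1 : ℝ) * agf a ij.1 * agf b ij.2)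
            + ∑ ij ∈ Finset.HasAntidiagonal.antidiagonal (M+1), (ij.2 : ℝ) * (agf a ij.1 * agf b ij.2) := by
        rw [Finset.mul_sum, ← Finset.sum_add_distrib]
        apply Finset.sum_congr rfl
        intro ij hij
        have : ij.1 + ij.2 = M + 1 := Finset.HasAntidiagonal.mem_antidiagonal.mp hij
        have h' : (ij.1 : ℝ) + ij.2 = (M : ℝ) + 1 := by exact_mod_cast congrArg Nat.cast this
        linear_combination -(agf a ij.1 * agf b ij.2) * h'
      have h1 : ∑ ij ∈ Finset.HasAntidiagonal.antidiagonal (M+1), (ij.1 : ℝ) * agf a ij.1 * agf b ij.2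
          = ∑ ij ∈ Finset.HasAntidiagonal.antidiagonal M, (a + ij.1) * agf a ij.1 * agf b ij.2 := by
        rw [Finset.Nat.antidiagonal_succ, Finset.sum_cons]
        simp only [Nat.cast_zero, zero_mul, zero_add, Finset.sum_map]
        apply Finset.sum_congr rfl
        intro ij _
        simp only [Function.Embedding.prodMap, Function.Embedding.coeFn_mk,
          Function.Embedding.refl_apply, Prod.map]
        push_cast
        rw [show ((ij.1 : ℝ) + 1) * agf a (ij.1 + 1) = (a + ij.1) * agf a ij.1 from
          agf_succ_mul a ij.1]
      have h2 : ∑ ij ∈ Finset.HasAntidiagonal.antidiagonal (M+1), (ij.2 : ℝ) * (agf a ij.1 * agf b ij.2)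
          = ∑ ij ∈ Finset.HasAntidiagonal.antidiagonal M, (b + ij.2) * (agf a ij.1 * agf b ij.2) := by
        rw [Finset.Nat.antidiagonal_succ', Finset.sum_cons]
        simp only [Nat.cast_zero, zero_mul, zero_add, Finset.sum_map]
        apply Finset.sum_congr rfl
        intro ij _
        simp only [Function.Embedding.prodMap, Function.Embedding.coeFn_mk,
          Function.Embedding.refl_apply, Prod.map]
        push_cast
        have h' := agf_succ_mul b ij.2
        linear_combination agf a ij.1 * h'
      rw [hsplit, h1, h2, show ((M:ℝ)+1) * agf (a+b) (M+1) = (a + b + M) * agf (a+b) M from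
        by have := agf_succ_mul (a+b) M; push_cast at this ⊢; linarith, ← ih, Finset.mul_sum,
        ← Finset.sum_add_distrib]
      apply Finset.sum_congr rfl
      intro ij hij
      have h : ij.1 + ij.2 = M := Finset.HasAntidiagonal.mem_antidiagonal.mp hij
      have h' : (ij.1 : ℝ) + ij.2 = (M : ℝ) := by exact_mod_cast congrArg Nat.cast h
      linear_combination (agf a ij.1 * agf b ij.2) * h'
    exact mul_left_cancel₀ hM1 key

lemma sum_antidiagonalTuple_succ {M : Type*} [AddCommMonoid M] (K n : ℕ)
    (f : (Fin (K+1) → ℕ) → M) :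
    ∑ m ∈ Finset.Nat.antidiagonalTuple (K+1) n, f m
      = ∑ ij ∈ Finset.HasAntidiagonal.antidiagonal n,
          ∑ m ∈ Finset.Nat.antidiagonalTuple K ij.2, f (Fin.cons ij.1 m) := by
  rw [Finset.sum_sigma']
  refine Finset.sum_nbij' (fun m => ⟨(m 0, ∑ i, Fin.tail m i), Fin.tail m⟩)
    (fun x => Fin.cons x.1.1 x.2) ?_ ?_ ?_ ?_ ?_
  · intro m hm
    rw [Finset.Nat.mem_antidiagonalTuple] at hm
    simp only [Finset.mem_sigma, Finset.HasAntidiagonal.mem_antidiagonal, Finset.Nat.mem_antidiagonalTuple]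
    exact ⟨by rw [← hm, Fin.sum_univ_succ]; rfl, trivial⟩
  · rintro ⟨⟨i, j⟩, m⟩ hx
    simp only [Finset.mem_sigma, Finset.HasAntidiagonal.mem_antidiagonal,
      Finset.Nat.mem_antidiagonalTuple] at hx ⊢
    rw [Fin.sum_univ_succ]
    simp [Fin.cons_zero, Fin.cons_succ, hx.2, hx.1]
  · intro m _
    simp [Fin.cons_self_tail]
  · rintro ⟨⟨i, j⟩, m⟩ hx
    simp only [Finset.mem_sigma, Finset.HasAntidiagonal.mem_antidiagonal,
      Finset.Nat.mem_antidiagonalTuple] at hx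
    simp [Fin.tail_cons, Fin.cons_zero, hx.2]
  · intro m _
    simp [Fin.cons_self_tail]

lemma agf_tuple_sum (a : ℝ) : ∀ K M : ℕ,
    ∑ m ∈ Finset.Nat.antidiagonalTuple K M, ∏ i, agf a (m i) = agf ((K : ℝ) * a) M := by
  intro K
  induction K with
  | zero =>
    intro M
    cases M with
    | zero => simp [agf_zero]
    | succ M =>
      rw [show Finset.Nat.antidiagonalTuple 0 (M+1) = ∅ from rfl]
      simp only [Finset.sum_empty, Nat.cast_zero, zero_mul]
      rw [agf, ascPochhammer_succ_left]
      simp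
  | succ K ih =>
    intro M
    rw [sum_antidiagonalTuple_succ]
    have : ∀ ij ∈ Finset.HasAntidiagonal.antidiagonal M,
        (∑ m ∈ Finset.Nat.antidiagonalTuple K ij.2, ∏ i, agf a ((Fin.cons ij.1 m : Fin (K+1) → ℕ) i))
          = agf a ij.1 * agf ((K:ℝ) * a) ij.2 := by
      intro ij _
      rw [← ih ij.2, Finset.mul_sum]
      apply Finset.sum_congr rfl
      intro m _
      rw [Fin.prod_univ_succ]
      simp [Fin.cons_zero, Fin.tail_cons]
    rw [Finset.sum_congr rfl this, agf_vandermonde]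
    push_cast
    ring_nf

lemma Gamma_add_nat_eq (r : ℝ) (hr : 0 < r) (k : ℕ) :
    Real.Gamma (r + k) = (ascPochhammer ℝ k).eval r * Real.Gamma r := by
  induction k with
  | zero => simp
  | succ k ih =>
    have h1 : r + (k : ℝ) ≠ 0 := by positivity
    have : r + ((k : ℕ) + 1 : ℕ) = (r + k) + 1 := by push_cast; ring
    rw [this, Real.Gamma_add_one h1, ascPochhammer_succ_right]
    simp only [Polynomial.eval_mul, Polynomial.eval_add, Polynomial.eval_X,
      Polynomial.eval_natCast]
    rw [ih]; ring

lemma negBinPMF_eq (r p : ℝ) (hr : 0 < r) (k : ℕ) :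
    negBinPMF r p k = agf r k * ((1 - p) ^ r * p ^ k) := by
  have hG : Real.Gamma r ≠ 0 := (Real.Gamma_pos_of_pos hr).ne'
  have hk : (k.factorial : ℝ) ≠ 0 := by exact_mod_cast k.factorial_ne_zero
  rw [negBinPMF, Gamma_add_nat_eq r hr k, agf]
  field_simp

lemma agf_eq_beta (a : ℝ) (ha : 0 < a) (d : ℕ) (hd : 1 ≤ d) :
    agf a d = 1 / ((d : ℝ) * realBeta a (d : ℝ)) := by
  have hGa : 0 < Real.Gamma a := Real.Gamma_pos_of_pos ha
  have hGd : Real.Gamma (d : ℝ) = (d - 1).factorial := by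
    rw [show ((d : ℕ) : ℝ) = ((d - 1 : ℕ) : ℝ) + 1 by
      push_cast [Nat.cast_sub hd]; ring]
    exact Real.Gamma_nat_eq_factorial (d - 1)
  have hdf : (d : ℝ) * (d - 1).factorial = d.factorial := by
    rw [← Nat.mul_factorial_pred (by omega : d ≠ 0)]; push_cast; ring
  have hG : Real.Gamma (a + d) = (ascPochhammer ℝ d).eval a * Real.Gamma a :=
    Gamma_add_nat_eq a ha d
  have hGad : 0 < Real.Gamma (a + d) := Real.Gamma_pos_of_pos (by positivity)
  have hasc : (ascPochhammer ℝ d).eval a ≠ 0 := by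
    intro h; rw [hG, h, zero_mul] at hGad; exact lt_irrefl 0 hGad
  have hdfne : (d.factorial : ℝ) ≠ 0 := by exact_mod_cast d.factorial_ne_zero
  rw [agf, realBeta, hG, hGd]
  rw [div_eq_div_iff hdfne (by positivity)]
  field_simp
  nlinarith [hdf, hGa]

lemma comp_eq (r p : ℝ) (hr : 0 < r) (n K : ℕ) (h1 : 1 ≤ K) (h2 : K ≤ n) (hp : p < 1) :
    compositionProb (shiftedNegBin r p) K n
      = (1 - p) ^ (r * (K : ℝ)) * p ^ (n - K) * agf (r * K) (n - K) := by
  have hstep : compositionProb (shiftedNegBin r p) K n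
      = ∑ m ∈ Finset.Nat.antidiagonalTuple K (n - K), ∏ i, negBinPMF r p (m i) := by
    rw [compositionProb]
    refine Finset.sum_nbij' (fun m i => m i - 1) (fun m i => m i + 1) ?_ ?_ ?_ ?_ ?_
    · intro m hm
      rw [Finset.mem_filter, Finset.Nat.mem_antidiagonalTuple] at hm
      rw [Finset.Nat.mem_antidiagonalTuple]
      rw [Finset.sum_tsub_distrib _ (fun i _ => hm.2 i), hm.1]
      simp
    · intro m hm
      rw [Finset.Nat.mem_antidiagonalTuple] at hm
      rw [Finset.mem_filter, Finset.Nat.mem_antidiagonalTuple]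
      constructor
      · rw [Finset.sum_add_distrib, hm]
        simp [Nat.sub_add_cancel h2]
      · intro i
        show 1 ≤ m i + 1
        omega
    · intro m hm
      rw [Finset.mem_filter] at hm
      funext i
      exact Nat.sub_add_cancel (hm.2 i)
    · intro m _
      funext i
      simp
    · intro m hm
      rw [Finset.mem_filter] at hm
      apply Finset.prod_congr rfl
      intro i _
      have h := hm.2 i
      simp only [shiftedNegBin]
      rw [if_neg (by omega)]
  rw [hstep]
  have hterm : ∀ m ∈ Finset.Nat.antidiagonalTuple K (n - K),
      ∏ i, negBinPMF r p (m i)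
        = ((1 - p) ^ r) ^ K * p ^ (n - K) * ∏ i, agf r (m i) := by
    intro m hm
    rw [Finset.Nat.mem_antidiagonalTuple] at hm
    calc ∏ i, negBinPMF r p (m i)
        = ∏ i, (agf r (m i) * ((1 - p) ^ r * p ^ (m i))) := by
          exact Finset.prod_congr rfl fun i _ => negBinPMF_eq r p hr (m i)
      _ = (∏ i, agf r (m i)) * (((1 - p) ^ r) ^ K * ∏ i, p ^ (m i)) := by
          rw [Finset.prod_mul_distrib, Finset.prod_mul_distrib, Finset.prod_const]
          simp
      _ = ((1 - p) ^ r) ^ K * p ^ (n - K) * ∏ i, agf r (m i) := by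
          rw [Finset.prod_pow_eq_pow_sum, hm]; ring
  rw [Finset.sum_congr rfl hterm, ← Finset.mul_sum, agf_tuple_sum,
    mul_comm (K : ℝ) r]
  have hrpow : ((1 - p : ℝ) ^ r) ^ K = (1 - p) ^ (r * (K : ℝ)) := by
    rw [← Real.rpow_natCast ((1 - p) ^ r) K, ← Real.rpow_mul (by linarith)]
  rw [hrpow]


/-- In the ESC model with `ν = NegBin(r, p) + 1`, the conditional distribution of the number
of clusters `K` given `r, p` is
`π(K | r, p) = (1/P(E_n|r,p))·(1−p)^{rK} p^{n−K}/((n−K)·B(rK, n−K))` for `1 ≤ K < n`, and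
`π(n | r, p) = (1/P(E_n|r,p))·(1−p)^{rn}`. -/
theorem ESC_NB_conditional_K (r p : ℝ) (hr : 0 < r) (hp₀ : 0 < p) (hp₁ : p < 1) (n : ℕ)
    (hn : 1 ≤ n) :
    (∀ K : ℕ, 1 ≤ K → K < n →
        compositionProb (shiftedNegBin r p) K n / hitProb (shiftedNegBin r p) n
          = (1 / hitProb (shiftedNegBin r p) n) *
              ((1 - p) ^ (r * K) * p ^ (n - K) / ((n - K) * realBeta (r * K) (n - K)))) ∧
      compositionProb (shiftedNegBin r p) n n / hitProb (shiftedNegBin r p) n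
        = (1 / hitProb (shiftedNegBin r p) n) * (1 - p) ^ (r * n) := by
  constructor
  · intro K h1 h2
    rw [comp_eq r p hr n K h1 h2.le hp₁,
      agf_eq_beta (r * K) (by positivity) (n - K) (by omega), Nat.cast_sub h2.le]
    ring
  · rw [comp_eq r p hr n n hn le_rfl hp₁]
    simp [agf_zero]
    ring
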